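/- The deformed daggers on two-tensors are intertwined by T_θ: writing †_{1⊗1} for the dagger on Ω¹_θ ⊗_θ Ω¹_θ given by (ω ⊗_θ η)† = η† ⊗_θ ω† with ω† = λ^{n₁(ω)n₂(ω)}ω*, and †_{2,θ}(ω⊗η) := λ^{(n₂(ω)+n₂(η))(n₁(ω)+n₁(η))} η*⊗ω* on (Ω¹⊗Ω¹)_θ, one has †_{1⊗_θ1} = T_θ ∘ †_{2,θ} ∘ T_θ^{−1}. -/

import Mathlib

/-- The deformed daggers on two-tensors are intertwined by `T_θ`:
with `†_{1⊗_θ1}(ω⊗_θη) = λ^{n₁(η)n₂(η)}λ^{n₁(ω)n₂(ω)} η*⊗_θω*` on `Ω¹_θ⊗_θΩ¹_θ` and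
`†_{2,θ}(ω⊗η) = λ^{(n₂(ω)+n₂(η))(n₁(ω)+n₁(η))} η*⊗ω*` on `(Ω¹⊗Ω¹)_θ`, one has
`†_{1⊗_θ1} = T_θ ∘ †_{2,θ} ∘ T_θ⁻¹` (stated on generators as
`T_θ(†_{2,θ}(ω⊗η)) = †_{1⊗_θ1}(T_θ(ω⊗η))`). -/
theorem stmt_17 {Ω T Tθ : Type*}
    [AddCommGroup Ω] [Module ℂ Ω] [AddCommGroup T] [Module ℂ T] [AddCommGroup Tθ] [Module ℂ Tθ]
    (l : ℂ) (hl : ‖l‖ = 1)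
    (Gr : ℤ × ℤ → Submodule ℂ Ω)
    (starΩ : Ω → Ω)
    (hstarGr : ∀ n : ℤ × ℤ, ∀ ω ∈ Gr n, starΩ ω ∈ Gr (-n))
    (t : Ω → Ω → T) (tθ : Ω → Ω → Tθ)
    (Tmap : T → Tθ)
    (hTmap_s : ∀ (c : ℂ) (v : T), Tmap (c • v) = c • Tmap v)
    (hTmap_t : ∀ (m n : ℤ × ℤ) (ω η : Ω), ω ∈ Gr m → η ∈ Gr n →
      Tmap (t ω η) = l ^ (-(m.2 * n.1)) • tθ ω η)
    (dag2θ : T → T)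
    (hdag2θ_t : ∀ (m n : ℤ × ℤ) (ω η : Ω), ω ∈ Gr m → η ∈ Gr n →
      dag2θ (t ω η) = l ^ ((m.2 + n.2) * (m.1 + n.1)) • t (starΩ η) (starΩ ω))
    (dag1θ : Tθ → Tθ)
    (hdag1θ_s : ∀ (c : ℂ) (v : Tθ), dag1θ (c • v) = (starRingEnd ℂ) c • dag1θ v)
    (hdag1θ_t : ∀ (m n : ℤ × ℤ) (ω η : Ω), ω ∈ Gr m → η ∈ Gr n →
      dag1θ (tθ ω η) = l ^ (n.1 * n.2) • l ^ (m.1 * m.2) • tθ (starΩ η) (starΩ ω)) :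
    ∀ (m n : ℤ × ℤ) (ω η : Ω), ω ∈ Gr m → η ∈ Gr n →
      Tmap (dag2θ (t ω η)) = dag1θ (Tmap (t ω η)) := by
  intro m n ω η hω hη
  have hl0 : l ≠ 0 := by
    intro h; rw [h] at hl; simp at hl
  have hconj : ∀ z : ℤ, (starRingEnd ℂ) (l ^ z) = l ^ (-z) := by
    intro z
    have h1 : (starRingEnd ℂ) l = l⁻¹ := by
      have : l * (starRingEnd ℂ) l = 1 := by
        rw [Complex.mul_conj]
        norm_cast
        rw [← Complex.sq_norm, hl]; norm_num
      field_simp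
      linear_combination this
    rw [map_zpow₀, h1, inv_zpow, ← zpow_neg]
  rw [hdag2θ_t m n ω η hω hη, hTmap_s,
    hTmap_t (-n) (-m) _ _ (hstarGr n η hη) (hstarGr m ω hω),
    hTmap_t m n ω η hω hη, hdag1θ_s, hconj,
    hdag1θ_t m n ω η hω hη, smul_smul, smul_smul, smul_smul,
    ← zpow_add₀ hl0, ← zpow_add₀ hl0, ← zpow_add₀ hl0]
  simp only [Prod.fst_neg, Prod.snd_neg, neg_mul, mul_neg, neg_neg]
  ring_nf
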